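/- arXiv:2311.05517 — 2 statements merged into one kernel-verified Lean document; each statement's English description precedes it below -/
import Mathlib

section
/- For all positive integers m and n there exist a set P of m distinct points in ℝ² and n distinct positive real numbers c₁, …, c_n such that every point (x, y) ∈ P satisfies y = cos(c_j · x) for every j = 1, …, n. In particular, the m points of P and the n pairwise distinct curves { (x, y) ∈ ℝ² : y = cos(c_j x) } determine exactly m·n incidences. -/
open Real

lemma cos_scale_eq {a b : ℝ} (ha : 0 < a) (hb : 0 < b)
    (h : ∀ x : ℝ, Real.cos (a * x) = Real.cos (b * x)) : a = b := by
  by_contra hne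
  wlog hab : a < b generalizing a b
  · exact this hb ha (fun x => (h x).symm) (Ne.symm hne)
      (lt_of_le_of_ne (not_lt.mp hab) (Ne.symm hne))
  have hx := h (π / b)
  have hbb : b * (π / b) = π := by field_simp
  have hav : a * (π / b) < π := by
    nlinarith [div_pos Real.pi_pos hb, mul_lt_mul_of_pos_right hab (div_pos Real.pi_pos hb)]
  have hav0 : 0 ≤ a * (π / b) := le_of_lt (mul_pos ha (div_pos Real.pi_pos hb))
  have hmono := Real.strictAntiOn_cos ⟨hav0, le_of_lt hav⟩ ⟨Real.pi_pos.le, le_refl π⟩ hav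
  rw [hbb, Real.cos_pi] at hx
  rw [Real.cos_pi] at hmono
  linarith

lemma cos_pts_inj : Function.Injective (fun k : ℕ => ((2 * π * k : ℝ), (1 : ℝ))) := by
  intro a b hab
  have h := congrArg Prod.fst hab
  simp only at h
  have h2π : (0:ℝ) < 2 * π := by positivity
  exact_mod_cast mul_left_cancel₀ (ne_of_gt h2π) h

/-- For all `m, n` there are `m` points and `n` distinct scalings `y = cos(cⱼ·x)` of the
cosine curve such that every point lies on every curve, giving exactly `m·n` incidences. -/
theorem cos_scalings_many_incidences (m n : ℕ) (hm : 0 < m) (hn : 0 < n) :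
    ∃ (P : Finset (ℝ × ℝ)) (c : Fin n → ℝ),
      P.card = m ∧
      (∀ j, 0 < c j) ∧
      Function.Injective c ∧
      Function.Injective (fun j => {p : ℝ × ℝ | p.2 = Real.cos (c j * p.1)}) ∧
      (∀ p ∈ P, ∀ j : Fin n, p.2 = Real.cos (c j * p.1)) ∧
      Set.ncard {x : (ℝ × ℝ) × Fin n | x.1 ∈ P ∧ x.1.2 = Real.cos (c x.2 * x.1.1)} =
        m * n := by
  set P := (Finset.range m).image (fun k : ℕ => ((2 * π * k : ℝ), (1 : ℝ))) with hP
  have hcard : P.card = m := by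
    rw [hP, Finset.card_image_of_injective _ cos_pts_inj, Finset.card_range]
  have hall : ∀ p ∈ P, ∀ j : Fin n, p.2 = Real.cos (((j : ℕ) + 1 : ℝ) * p.1) := by
    intro p hp j
    simp only [hP, Finset.mem_image, Finset.mem_range] at hp
    obtain ⟨k, _, rfl⟩ := hp
    show (1 : ℝ) = Real.cos ((((j : ℕ) : ℝ) + 1) * (2 * π * k))
    have he : ((((j : ℕ) : ℝ) + 1) * (2 * π * k)) = (((((j : ℕ) + 1) * k : ℕ) : ℤ) : ℝ) * (2 * π) := by
      push_cast; ring
    rw [he, Real.cos_int_mul_two_pi]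
  refine ⟨P, fun j => ((j : ℕ) + 1 : ℝ), hcard, ?_, ?_, ?_, hall, ?_⟩
  · intro j; positivity
  · intro i j hij
    simp only at hij
    have h2 : ((i:ℕ):ℝ) = ((j:ℕ):ℝ) := by linarith
    exact Fin.ext (by exact_mod_cast h2)
  · intro i j hij
    simp only at hij
    have hpt : ∀ x : ℝ, Real.cos ((((i : ℕ) : ℝ) + 1) * x) = Real.cos ((((j : ℕ) : ℝ) + 1) * x) := by
      intro x
      have hmem : (x, Real.cos ((((i : ℕ) : ℝ) + 1) * x)) ∈
          {p : ℝ × ℝ | p.2 = Real.cos ((((i : ℕ) : ℝ) + 1) * p.1)} := rfl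
      rw [hij] at hmem
      simpa using hmem
    have hi : (0:ℝ) < ((i : ℕ) : ℝ) + 1 := by positivity
    have hj : (0:ℝ) < ((j : ℕ) : ℝ) + 1 := by positivity
    have h := cos_scale_eq hi hj hpt
    have h2 : ((i:ℕ):ℝ) = ((j:ℕ):ℝ) := by linarith
    exact Fin.ext (by exact_mod_cast h2)
  · have hset : {x : (ℝ × ℝ) × Fin n | x.1 ∈ P ∧ x.1.2 = Real.cos ((((x.2 : ℕ) : ℝ) + 1) * x.1.1)} =
        ↑(P ×ˢ (Finset.univ : Finset (Fin n))) := by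
      ext ⟨p, j⟩
      simp only [Set.mem_setOf_eq, Finset.coe_product, Set.mem_prod, Finset.mem_coe,
        Finset.coe_univ, Set.mem_univ, and_true]
      exact ⟨fun h => h.1, fun h => ⟨h, hall p h j⟩⟩
    rw [show {x : (ℝ × ℝ) × Fin n | x.1 ∈ P ∧ x.1.2 = Real.cos ((((x.2 : ℕ) : ℝ) + 1) * x.1.1)} =
        ↑(P ×ˢ (Finset.univ : Finset (Fin n))) from hset,
      Set.ncard_coe_finset, Finset.card_product, Finset.card_univ, Fintype.card_fin, hcard]
end

section
/- There exists a constant c > 0 such that for every positive integer n there exist a set P of n distinct points in ℝ², each with positive first coordinate, and n distinct pairs (a₁, b₁), …, (a_n, b_n) ∈ ℝ² such that the number of pairs (p, j) with p = (x, y) ∈ P and y = a_j·ln x + b_j is at least c·n^{4/3}. -/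
open Real

private lemma divmod_aux {m a b : ℕ} (h : 0 < m) (hb : b < m) :
    (m * a + b) / m = a ∧ (m * a + b) % m = b := by
  constructor
  · rw [Nat.mul_add_div h, Nat.div_eq_of_lt hb, add_zero]
  · rw [Nat.mul_add_mod, Nat.mod_eq_of_lt hb]

/-- Points: grid `(e^x, y)` for `x < 2r`, `y < 4r²`, padded with junk points. -/
noncomputable def gridPt (r : ℕ) (i : ℕ) : ℝ × ℝ :=
  if i < 8 * r ^ 3 then (Real.exp ((i / (4 * r ^ 2) : ℕ) : ℝ), ((i % (4 * r ^ 2) : ℕ) : ℝ))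
  else (Real.exp (((2 * r + i : ℕ)) : ℝ), 0)

/-- Curves: `(a, b)` with `a < r`, `b < 2r²`, padded with junk curves. -/
def gridAB (r : ℕ) (j : ℕ) : ℝ × ℝ :=
  if j < 2 * r ^ 3 then (((j / (2 * r ^ 2) : ℕ) : ℝ), ((j % (2 * r ^ 2) : ℕ) : ℝ))
  else (0, ((2 * r ^ 2 + j : ℕ) : ℝ))

private lemma gridPt_inj (r : ℕ) (hr : 0 < r) : Function.Injective (gridPt r) := by
  have h4 : 0 < 4 * r ^ 2 := by positivity
  intro i j hij
  unfold gridPt at hij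
  by_cases hi : i < 8 * r ^ 3 <;> by_cases hj : j < 8 * r ^ 3 <;>
    simp only [hi, hj, if_true, if_false, Prod.mk.injEq] at hij
  · have h1 : (i / (4 * r ^ 2)) = (j / (4 * r ^ 2)) := by
      have := Real.exp_injective hij.1
      exact_mod_cast this
    have h2 : (i % (4 * r ^ 2)) = (j % (4 * r ^ 2)) := by exact_mod_cast hij.2
    calc i = 4 * r ^ 2 * (i / (4 * r ^ 2)) + i % (4 * r ^ 2) := (Nat.div_add_mod i _).symm
      _ = 4 * r ^ 2 * (j / (4 * r ^ 2)) + j % (4 * r ^ 2) := by rw [h1, h2]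
      _ = j := Nat.div_add_mod j _
  · exfalso
    have h1 : (i / (4 * r ^ 2)) = 2 * r + j := by
      have := Real.exp_injective hij.1
      exact_mod_cast this
    have : i / (4 * r ^ 2) < 2 * r := by
      apply Nat.div_lt_of_lt_mul
      calc i < 8 * r ^ 3 := hi
        _ = 4 * r ^ 2 * (2 * r) := by ring
    omega
  · exfalso
    have h1 : (2 * r + i) = j / (4 * r ^ 2) := by
      have := Real.exp_injective hij.1
      exact_mod_cast this
    have : j / (4 * r ^ 2) < 2 * r := by
      apply Nat.div_lt_of_lt_mul
      calc j < 8 * r ^ 3 := hj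
        _ = 4 * r ^ 2 * (2 * r) := by ring
    omega
  · have h1 : 2 * r + i = 2 * r + j := by
      have := Real.exp_injective hij.1
      exact_mod_cast this
    omega

private lemma gridAB_inj (r : ℕ) (hr : 0 < r) : Function.Injective (gridAB r) := by
  have h2 : 0 < 2 * r ^ 2 := by positivity
  intro i j hij
  unfold gridAB at hij
  by_cases hi : i < 2 * r ^ 3 <;> by_cases hj : j < 2 * r ^ 3 <;>
    simp only [hi, hj, if_true, if_false, Prod.mk.injEq] at hij
  · have h1 : (i / (2 * r ^ 2)) = (j / (2 * r ^ 2)) := by exact_mod_cast hij.1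
    have hm : (i % (2 * r ^ 2)) = (j % (2 * r ^ 2)) := by exact_mod_cast hij.2
    calc i = 2 * r ^ 2 * (i / (2 * r ^ 2)) + i % (2 * r ^ 2) := (Nat.div_add_mod i _).symm
      _ = 2 * r ^ 2 * (j / (2 * r ^ 2)) + j % (2 * r ^ 2) := by rw [hm, h1]
      _ = j := Nat.div_add_mod j _
  · exfalso
    have h1 : (i % (2 * r ^ 2)) = 2 * r ^ 2 + j := by exact_mod_cast hij.2
    have := Nat.mod_lt i h2
    omega
  · exfalso
    have h1 : (2 * r ^ 2 + i) = j % (2 * r ^ 2) := by exact_mod_cast hij.2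
    have := Nat.mod_lt j h2
    omega
  · have h1 : 2 * r ^ 2 + i = 2 * r ^ 2 + j := by exact_mod_cast hij.2
    omega

/-- The grid construction for large `n`. -/
private lemma grid_case (n r : ℕ) (hn : 0 < n) (hr : 0 < r) (h8 : 8 * r ^ 3 ≤ n) :
    ∃ (P : Finset (ℝ × ℝ)) (ab : Fin n → ℝ × ℝ),
      P.card = n ∧ (∀ p ∈ P, 0 < p.1) ∧ Function.Injective ab ∧
      (4 * (r : ℝ) ^ 4 : ℝ) ≤
        (Set.ncard {x : (ℝ × ℝ) × Fin n |
            x.1 ∈ P ∧ x.1.2 = (ab x.2).1 * Real.log x.1.1 + (ab x.2).2} : ℝ) := by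
  classical
  have h2 : 0 < 2 * r ^ 2 := by positivity
  have h4 : 0 < 4 * r ^ 2 := by positivity
  set P : Finset (ℝ × ℝ) := (Finset.range n).image (gridPt r) with hP
  set ab : Fin n → ℝ × ℝ := fun j => gridAB r (j : ℕ) with hab
  set I : Set ((ℝ × ℝ) × Fin n) :=
    {x : (ℝ × ℝ) × Fin n | x.1 ∈ P ∧ x.1.2 = (ab x.2).1 * Real.log x.1.1 + (ab x.2).2} with hI
  -- the triple set and the injection into incidences
  set T : Finset (ℕ × ℕ × ℕ) :=
    (Finset.range (2 * r)) ×ˢ ((Finset.range r) ×ˢ (Finset.range (2 * r ^ 2))) with hT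
  set g : ℕ × ℕ × ℕ → (ℝ × ℝ) × Fin n := fun t =>
    (gridPt r (4 * r ^ 2 * t.1 + (t.2.1 * t.1 + t.2.2)),
     ⟨(2 * r ^ 2 * t.2.1 + t.2.2) % n, Nat.mod_lt _ hn⟩) with hg
  have memT : ∀ t : ℕ × ℕ × ℕ, t ∈ T ↔ t.1 < 2 * r ∧ t.2.1 < r ∧ t.2.2 < 2 * r ^ 2 := by
    intro t; simp [hT, Finset.mem_product]
  -- bounds for a triple in T
  have hy : ∀ t : ℕ × ℕ × ℕ, t ∈ T → t.2.1 * t.1 + t.2.2 < 4 * r ^ 2 := by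
    intro t ht
    obtain ⟨hx, ha, hb⟩ := (memT t).1 ht
    nlinarith [hx, ha, hb, hr]
  have hi8 : ∀ t : ℕ × ℕ × ℕ, t ∈ T →
      4 * r ^ 2 * t.1 + (t.2.1 * t.1 + t.2.2) < 8 * r ^ 3 := by
    intro t ht
    obtain ⟨hx, ha, hb⟩ := (memT t).1 ht
    nlinarith [hx, ha, hb, hr, hy t ht]
  have hj2 : ∀ t : ℕ × ℕ × ℕ, t ∈ T → 2 * r ^ 2 * t.2.1 + t.2.2 < 2 * r ^ 3 := by
    intro t ht
    obtain ⟨hx, ha, hb⟩ := (memT t).1 ht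
    nlinarith [ha, hb, hr]
  have h2n : 2 * r ^ 3 ≤ n := by omega
  -- g is injective on T
  have hginj : Set.InjOn g T := by
    intro t ht u hu he
    obtain ⟨x₁, a₁, b₁⟩ := t
    obtain ⟨x₂, a₂, b₂⟩ := u
    obtain ⟨hx₁, ha₁, hb₁⟩ := (memT _).1 ht
    obtain ⟨hx₂, ha₂, hb₂⟩ := (memT _).1 hu
    dsimp only at hx₁ ha₁ hb₁ hx₂ ha₂ hb₂
    have he1 := congrArg Prod.fst he
    have he2 := congrArg (fun z => ((Prod.snd z : Fin n) : ℕ)) he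
    simp only [hg] at he1 he2
    -- curve indices agree
    have hj₁ : (2 * r ^ 2 * a₁ + b₁) % n = 2 * r ^ 2 * a₁ + b₁ :=
      Nat.mod_eq_of_lt (lt_of_lt_of_le (hj2 _ ht) h2n)
    have hj₂ : (2 * r ^ 2 * a₂ + b₂) % n = 2 * r ^ 2 * a₂ + b₂ :=
      Nat.mod_eq_of_lt (lt_of_lt_of_le (hj2 _ hu) h2n)
    have hje : 2 * r ^ 2 * a₁ + b₁ = 2 * r ^ 2 * a₂ + b₂ := by
      rw [← hj₁, ← hj₂]; exact he2
    have hae : a₁ = a₂ := by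
      have d1 := (divmod_aux (a := a₁) h2 hb₁).1
      have d2 := (divmod_aux (a := a₂) h2 hb₂).1
      rw [← d1, ← d2, hje]
    have hbe : b₁ = b₂ := by
      have d1 := (divmod_aux (a := a₁) h2 hb₁).2
      have d2 := (divmod_aux (a := a₂) h2 hb₂).2
      rw [← d1, ← d2, hje]
    -- point indices agree
    have hie : 4 * r ^ 2 * x₁ + (a₁ * x₁ + b₁) = 4 * r ^ 2 * x₂ + (a₂ * x₂ + b₂) :=
      gridPt_inj r hr he1
    have hxe : x₁ = x₂ := by
      have d1 := (divmod_aux (a := x₁) h4 (hy _ ht)).1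
      have d2 := (divmod_aux (a := x₂) h4 (hy _ hu)).1
      simp only at d1 d2
      rw [← d1, ← d2, hie]
    simp [hxe, hae, hbe]
  -- the image of g lands in I
  have hsub : ↑(T.image g) ⊆ I := by
    intro z hz
    simp only [Finset.coe_image, Set.mem_image, Finset.mem_coe] at hz
    obtain ⟨t, ht, rfl⟩ := hz
    obtain ⟨x, a, b⟩ := t
    obtain ⟨hx, ha, hb⟩ := (memT _).1 ht
    have hyb : a * x + b < 4 * r ^ 2 := hy _ ht
    have hib : 4 * r ^ 2 * x + (a * x + b) < 8 * r ^ 3 := hi8 _ ht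
    have hjb : 2 * r ^ 2 * a + b < 2 * r ^ 3 := hj2 _ ht
    constructor
    · -- membership in P
      simp only [hP, Finset.mem_image]
      exact ⟨4 * r ^ 2 * x + (a * x + b), Finset.mem_range.2 (lt_of_lt_of_le hib h8), rfl⟩
    · -- the incidence equation
      have hmod : (2 * r ^ 2 * a + b) % n = 2 * r ^ 2 * a + b :=
        Nat.mod_eq_of_lt (lt_of_lt_of_le hjb h2n)
      have habv : ab ⟨(2 * r ^ 2 * a + b) % n, Nat.mod_lt _ hn⟩ = ((a : ℝ), (b : ℝ)) := by
        simp only [hab, hmod]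
        unfold gridAB
        rw [if_pos hjb, (divmod_aux h2 hb).1, (divmod_aux h2 hb).2]
      have hptv : gridPt r (4 * r ^ 2 * x + (a * x + b)) =
          (Real.exp (x : ℝ), ((a * x + b : ℕ) : ℝ)) := by
        unfold gridPt
        rw [if_pos hib, (divmod_aux h4 hyb).1, (divmod_aux h4 hyb).2]
      simp only [hg, hptv, habv, Real.log_exp]
      push_cast
      ring
  -- finiteness of I
  have hfin : I.Finite := by
    apply (P.finite_toSet.prod (Set.finite_univ (α := Fin n))).subset
    intro z hz
    exact ⟨hz.1, Set.mem_univ _⟩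
  -- counting
  have hcardT : T.card = 4 * r ^ 4 := by
    simp only [hT, Finset.card_product, Finset.card_range]
    ring
  have hcount : 4 * r ^ 4 ≤ I.ncard := by
    calc 4 * r ^ 4 = T.card := hcardT.symm
      _ = (T.image g).card := (Finset.card_image_of_injOn hginj).symm
      _ = (↑(T.image g) : Set ((ℝ × ℝ) × Fin n)).ncard := (Set.ncard_coe_finset _).symm
      _ ≤ I.ncard := Set.ncard_le_ncard hsub hfin
  refine ⟨P, ab, ?_, ?_, ?_, ?_⟩
  · rw [hP, Finset.card_image_of_injective _ (gridPt_inj r hr), Finset.card_range]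
  · intro p hp
    simp only [hP, Finset.mem_image] at hp
    obtain ⟨i, -, rfl⟩ := hp
    unfold gridPt
    split <;> exact Real.exp_pos _
  · exact fun i j hij => Fin.ext ((gridAB_inj r hr) hij)
  · calc (4 * (r : ℝ) ^ 4) = ((4 * r ^ 4 : ℕ) : ℝ) := by push_cast; ring
      _ ≤ (I.ncard : ℝ) := by exact_mod_cast hcount

/-- A lower-bound construction with logarithmic curves: there are `n` points (with positive
first coordinates) and `n` distinct curves `y = a·ln x + b` with at least `c·n^{4/3}`
incidences. -/
theorem log_curves_many_incidences :
    ∃ c : ℝ, 0 < c ∧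
      ∀ n : ℕ, 0 < n →
        ∃ (P : Finset (ℝ × ℝ)) (ab : Fin n → ℝ × ℝ),
          P.card = n ∧
          (∀ p ∈ P, 0 < p.1) ∧
          Function.Injective ab ∧
          c * (n : ℝ) ^ ((4 : ℝ) / 3) ≤
            (Set.ncard {x : (ℝ × ℝ) × Fin n |
                x.1 ∈ P ∧ x.1.2 = (ab x.2).1 * Real.log x.1.1 + (ab x.2).2} : ℝ) := by
  classical
  refine ⟨1 / 64, by norm_num, ?_⟩
  intro n hn
  by_cases hn8 : n < 8
  · -- small case: star construction, all curves through (1, 0)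
    set f : ℕ → ℝ × ℝ := fun i => (((i + 1 : ℕ) : ℝ), if i = 0 then (0 : ℝ) else 1) with hf
    have hfinj : Function.Injective f := by
      intro i j hij
      have := congrArg Prod.fst hij
      simp only [hf] at this
      exact_mod_cast Nat.add_right_cancel (Nat.cast_injective this)
    set P : Finset (ℝ × ℝ) := (Finset.range n).image f with hP
    set ab : Fin n → ℝ × ℝ := fun j => (((j : ℕ) : ℝ), 0) with hab
    set I : Set ((ℝ × ℝ) × Fin n) :=
      {x : (ℝ × ℝ) × Fin n | x.1 ∈ P ∧ x.1.2 = (ab x.2).1 * Real.log x.1.1 + (ab x.2).2}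
      with hI
    have hp0 : ((1 : ℝ), (0 : ℝ)) ∈ P := by
      simp only [hP, Finset.mem_image]
      exact ⟨0, Finset.mem_range.2 hn, by simp [hf]⟩
    have hsub : Set.range (fun j : Fin n => (((1 : ℝ), (0 : ℝ)), j)) ⊆ I := by
      rintro z ⟨j, rfl⟩
      refine ⟨hp0, ?_⟩
      simp [hab, Real.log_one]
    have hfinI : I.Finite := by
      apply (P.finite_toSet.prod (Set.finite_univ (α := Fin n))).subset
      intro z hz
      exact ⟨hz.1, Set.mem_univ _⟩
    have hcount : n ≤ I.ncard := by
      have hrinj : Function.Injective (fun j : Fin n => (((1 : ℝ), (0 : ℝ)), j)) := by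
        intro i j hij
        exact congrArg Prod.snd hij
      calc n = (Set.range (fun j : Fin n => (((1 : ℝ), (0 : ℝ)), j))).ncard := by
              rw [← Set.image_univ, Set.ncard_image_of_injective _ hrinj, Set.ncard_univ]
              simp
        _ ≤ I.ncard := Set.ncard_le_ncard hsub hfinI
    refine ⟨P, ab, ?_, ?_, ?_, ?_⟩
    · rw [hP, Finset.card_image_of_injective _ hfinj, Finset.card_range]
    · intro p hp
      simp only [hP, Finset.mem_image] at hp
      obtain ⟨i, -, rfl⟩ := hp
      simp only [hf]
      positivity
    · intro i j hij
      have := congrArg Prod.fst hij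
      simp only [hab] at this
      exact Fin.ext (Nat.cast_injective this)
    · have hle : (1 : ℝ) / 64 * (n : ℝ) ^ ((4 : ℝ) / 3) ≤ (n : ℝ) := by
        have hnpos : (0 : ℝ) < n := by exact_mod_cast hn
        have h13 : (n : ℝ) ^ ((1 : ℝ) / 3) ≤ 2 := by
          have hle8 : (n : ℝ) ≤ 8 := by exact_mod_cast le_of_lt hn8
          calc (n : ℝ) ^ ((1 : ℝ) / 3) ≤ (8 : ℝ) ^ ((1 : ℝ) / 3) :=
                Real.rpow_le_rpow (le_of_lt hnpos) hle8 (by norm_num)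
            _ = 2 := by
                rw [show (8 : ℝ) = 2 ^ (3 : ℕ) by norm_num, ← Real.rpow_natCast 2 3,
                  ← Real.rpow_mul (by norm_num)]
                norm_num
        have hsplit : (n : ℝ) ^ ((4 : ℝ) / 3) = (n : ℝ) * (n : ℝ) ^ ((1 : ℝ) / 3) := by
          rw [show (4 : ℝ) / 3 = 1 + 1 / 3 by norm_num, Real.rpow_add hnpos, Real.rpow_one]
        rw [hsplit]
        nlinarith [hnpos, h13]
      calc (1 : ℝ) / 64 * (n : ℝ) ^ ((4 : ℝ) / 3) ≤ (n : ℝ) := hle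
        _ ≤ (I.ncard : ℝ) := by exact_mod_cast hcount
  · -- large case: grid construction
    push_neg at hn8
    have hn8' : (8 : ℝ) ≤ (n : ℝ) := by exact_mod_cast hn8
    have hnpos : (0 : ℝ) < n := by positivity
    set x : ℝ := ((n : ℝ) / 8) ^ ((1 : ℝ) / 3) with hx
    have hx0 : 0 ≤ x := by positivity
    have hx1 : 1 ≤ x := by
      calc (1 : ℝ) = (1 : ℝ) ^ ((1 : ℝ) / 3) := (Real.one_rpow _).symm
        _ ≤ x := Real.rpow_le_rpow (by norm_num) (by linarith [hn8']) (by norm_num)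
    set r : ℕ := ⌊x⌋₊ with hr
    have hr1 : 1 ≤ r := Nat.le_floor (by exact_mod_cast hx1)
    have hrx : (r : ℝ) ≤ x := Nat.floor_le hx0
    have hx3 : x ^ (3 : ℕ) = (n : ℝ) / 8 := by
      rw [hx, ← Real.rpow_natCast (((n : ℝ) / 8) ^ ((1 : ℝ) / 3)) 3,
        ← Real.rpow_mul (by positivity)]
      norm_num
    have h8 : 8 * r ^ 3 ≤ n := by
      have hreal : 8 * (r : ℝ) ^ 3 ≤ (n : ℝ) := by
        have : (r : ℝ) ^ 3 ≤ x ^ 3 := pow_le_pow_left₀ (by positivity) hrx 3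
        nlinarith [hx3, this]
      exact_mod_cast hreal
    have hx2r : x ≤ 2 * r := by
      have h1 : x < (r : ℝ) + 1 := Nat.lt_floor_add_one x
      have h2 : (1 : ℝ) ≤ r := by exact_mod_cast hr1
      linarith
    have h4r : (n : ℝ) ^ ((1 : ℝ) / 3) ≤ 4 * r := by
      have hne : (n : ℝ) ^ ((1 : ℝ) / 3) = 2 * x := by
        rw [show (n : ℝ) = 8 * ((n : ℝ) / 8) by ring,
          Real.mul_rpow (by norm_num) (by positivity)]
        have h8r : (8 : ℝ) ^ ((1 : ℝ) / 3) = 2 := by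
          rw [show (8 : ℝ) = 2 ^ (3 : ℕ) by norm_num, ← Real.rpow_natCast 2 3,
            ← Real.rpow_mul (by norm_num)]
          norm_num
        rw [h8r, hx]
      rw [hne]
      linarith
    obtain ⟨P, ab, hcard, hpos, hinj, hcount⟩ := grid_case n r hn (by omega) h8
    refine ⟨P, ab, hcard, hpos, hinj, ?_⟩
    have hkey : (1 : ℝ) / 64 * (n : ℝ) ^ ((4 : ℝ) / 3) ≤ 4 * (r : ℝ) ^ 4 := by
      have h43 : (n : ℝ) ^ ((4 : ℝ) / 3) = ((n : ℝ) ^ ((1 : ℝ) / 3)) ^ (4 : ℕ) := by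
        rw [← Real.rpow_natCast ((n : ℝ) ^ ((1 : ℝ) / 3)) 4, ← Real.rpow_mul (le_of_lt hnpos)]
        norm_num
      have hpow : ((n : ℝ) ^ ((1 : ℝ) / 3)) ^ (4 : ℕ) ≤ (4 * (r : ℝ)) ^ (4 : ℕ) :=
        pow_le_pow_left₀ (Real.rpow_nonneg (le_of_lt hnpos) _) h4r 4
      rw [h43]
      nlinarith [hpow]
    linarith [hcount]
end
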